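/- In the smooth product setting, if both smooth almost contact structures (φ₁, ξ₁, η₁) on U₁ and (φ₂, ξ₂, η₂) on U₂ are normal, then for every a, b ∈ ℝ with b ≠ 0 the Nijenhuis tensor of J_{a,b} vanishes: N_{J_{a,b}}(X,Y) = 0 for all smooth vector fields X, Y on U₁ × U₂. -/

import Mathlib

open VectorField

/-- The Nijenhuis tensor `N_φ(X,Y)` of a smooth almost contact structure `(φ, ξ, η)`
at a point `x`:
`N_φ(X,Y) = [φX, φY] + φ(φ[X,Y]) − φ[φX, Y] − φ[X, φY] + dη(X,Y)·ξ`, where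
`dη(X,Y) = X(η(Y)) − Y(η(X)) − η([X,Y])`. -/
noncomputable def almostContactNijenhuis {E : Type*} [NormedAddCommGroup E]
    [NormedSpace ℝ E] (φ : E → (E →L[ℝ] E)) (ξ : E → E) (η : E → (E →L[ℝ] ℝ))
    (X Y : E → E) (x : E) : E :=
  lieBracket ℝ (fun y => φ y (X y)) (fun y => φ y (Y y)) x
    + φ x (φ x (lieBracket ℝ X Y x))
    - φ x (lieBracket ℝ (fun y => φ y (X y)) Y x)
    - φ x (lieBracket ℝ X (fun y => φ y (Y y)) x)
    + (fderiv ℝ (fun y => η y (Y y)) x (X x)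
        - fderiv ℝ (fun y => η y (X y)) x (Y x)
        - η x (lieBracket ℝ X Y x)) • ξ x

/-- The Nijenhuis tensor of a (pointwise) endomorphism field `J`:
`N_J(X,Y) = [JX, JY] + J(J[X,Y]) − J[JX, Y] − J[X, JY]`. -/
noncomputable def endNijenhuis {F : Type*} [NormedAddCommGroup F] [NormedSpace ℝ F]
    (J : F → F → F) (X Y : F → F) (x : F) : F :=
  lieBracket ℝ (fun p => J p (X p)) (fun p => J p (Y p)) x
    + J x (J x (lieBracket ℝ X Y x))
    - J x (lieBracket ℝ (fun p => J p (X p)) Y x)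
    - J x (lieBracket ℝ X (fun p => J p (Y p)) x)


section Algebra

variable {E : Type*} [NormedAddCommGroup E] [NormedSpace ℝ E]

lemma acs_phi_xi (f : E →L[ℝ] E) (e : E) (h : E →L[ℝ] ℝ)
    (h1 : h e = 1) (h2 : ∀ v, f (f v) = -v + h v • e) : f e = 0 := by
  have hfe : f (f e) = 0 := by rw [h2, h1]; simp
  have h3 : (0 : E) = -(f e) + h (f e) • e := by
    calc (0 : E) = f (f (f e)) := by rw [hfe, map_zero]
    _ = -(f e) + h (f e) • e := h2 (f e)
  have h4 : f e = h (f e) • e := by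
    have := h3
    rw [eq_comm, neg_add_eq_zero] at this
    exact this
  set c := h (f e) with hc
  have h5 : c = 0 := by
    have h7 := congrArg f h4
    rw [hfe, map_smul] at h7
    rw [h4] at h7
    rw [smul_smul] at h7
    have h8 := congrArg h h7.symm
    rw [map_zero, map_smul, smul_eq_mul, h1, mul_one] at h8
    exact mul_self_eq_zero.mp h8
  rw [h4, h5, zero_smul]

lemma acs_eta_phi (f : E →L[ℝ] E) (e : E) (h : E →L[ℝ] ℝ)
    (h1 : h e = 1) (h2 : ∀ v, f (f v) = -v + h v • e) (v : E) : h (f v) = 0 := by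
  have hfe := acs_phi_xi f e h h1 h2
  have c1 : f (f (f v)) = -(f v) := by
    rw [h2 v, map_add, map_neg, map_smul, hfe, smul_zero, add_zero]
  have c2 : f (f (f v)) = -(f v) + h (f v) • e := h2 (f v)
  have : h (f v) • e = 0 := by
    have := c1.symm.trans c2
    rwa [left_eq_add] at this
  have := congrArg h this
  rwa [map_zero, map_smul, smul_eq_mul, h1, mul_one] at this

end Algebra

section Deriv

variable {E : Type*} [NormedAddCommGroup E] [NormedSpace ℝ E]

lemma hasFDerivAt_of_contDiffOn {F : Type*} [NormedAddCommGroup F] [NormedSpace ℝ F]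
    {U : Set E} (hU : IsOpen U) {f : E → F} (hf : ContDiffOn ℝ (⊤ : ℕ∞) f U)
    {x : E} (hx : x ∈ U) : HasFDerivAt f (fderiv ℝ f x) x :=
  ((hf.differentiableOn (by simp)).differentiableAt (hU.mem_nhds hx)).hasFDerivAt

lemma hasFDerivAt_clm_apply_const {F G : Type*} [NormedAddCommGroup F] [NormedSpace ℝ F]
    [NormedAddCommGroup G] [NormedSpace ℝ G]
    {c : E → F →L[ℝ] G} {c' : E →L[ℝ] F →L[ℝ] G} {x : E}
    (hc : HasFDerivAt c c' x) (v : F) :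
    HasFDerivAt (fun p => c p v) (c'.flip v) x := by
  have := hc.clm_apply (hasFDerivAt_const v x)
  simpa using this

variable {U : Set E} {φ : E → E →L[ℝ] E} {ξ : E → E} {η : E → E →L[ℝ] ℝ} {x : E}

lemma acs_a' (hU : IsOpen U) (hξ : ContDiffOn ℝ (⊤ : ℕ∞) ξ U)
    (hη : ContDiffOn ℝ (⊤ : ℕ∞) η U) (hηξ : ∀ p ∈ U, η p (ξ p) = 1) (hx : x ∈ U) :
    ∀ w, η x (fderiv ℝ ξ x w) = - fderiv ℝ η x w (ξ x) := by
  have hξd := hasFDerivAt_of_contDiffOn hU hξ hx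
  have hηd := hasFDerivAt_of_contDiffOn hU hη hx
  have h1 := hηd.clm_apply hξd
  have h0 : HasFDerivAt (fun p => η p (ξ p)) (0 : E →L[ℝ] ℝ) x := by
    refine (hasFDerivAt_const (1:ℝ) x).congr_of_eventuallyEq ?_
    exact Filter.eventuallyEq_of_mem (hU.mem_nhds hx) (fun p hp => hηξ p hp)
  have h2 := h1.unique h0
  intro w
  have h3 := ContinuousLinearMap.ext_iff.mp h2 w
  simp only [ContinuousLinearMap.add_apply, ContinuousLinearMap.comp_apply,
    ContinuousLinearMap.flip_apply, ContinuousLinearMap.zero_apply] at h3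
  linarith

lemma acs_c' (hU : IsOpen U) (hφ : ContDiffOn ℝ (⊤ : ℕ∞) φ U)
    (hξ : ContDiffOn ℝ (⊤ : ℕ∞) ξ U)
    (hηξ : ∀ p ∈ U, η p (ξ p) = 1)
    (hφφ : ∀ p ∈ U, ∀ v, φ p (φ p v) = -v + η p v • ξ p) (hx : x ∈ U) :
    ∀ w, fderiv ℝ φ x w (ξ x) = - φ x (fderiv ℝ ξ x w) := by
  have hξd := hasFDerivAt_of_contDiffOn hU hξ hx
  have hφd := hasFDerivAt_of_contDiffOn hU hφ hx
  have h1 := hφd.clm_apply hξd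
  have h0 : HasFDerivAt (fun p => φ p (ξ p)) (0 : E →L[ℝ] E) x := by
    refine (hasFDerivAt_const (0:E) x).congr_of_eventuallyEq ?_
    exact Filter.eventuallyEq_of_mem (hU.mem_nhds hx)
      (fun p hp => acs_phi_xi (φ p) (ξ p) (η p) (hηξ p hp) (hφφ p hp))
  have h2 := h1.unique h0
  intro w
  have h3 := ContinuousLinearMap.ext_iff.mp h2 w
  simp only [ContinuousLinearMap.add_apply, ContinuousLinearMap.comp_apply,
    ContinuousLinearMap.flip_apply, ContinuousLinearMap.zero_apply] at h3
  linear_combination (norm := module) h3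

lemma acs_d' (hU : IsOpen U) (hφ : ContDiffOn ℝ (⊤ : ℕ∞) φ U)
    (hη : ContDiffOn ℝ (⊤ : ℕ∞) η U)
    (hηξ : ∀ p ∈ U, η p (ξ p) = 1)
    (hφφ : ∀ p ∈ U, ∀ v, φ p (φ p v) = -v + η p v • ξ p) (hx : x ∈ U) :
    ∀ w z, η x (fderiv ℝ φ x w z) = - fderiv ℝ η x w (φ x z) := by
  have hφd := hasFDerivAt_of_contDiffOn hU hφ hx
  have hηd := hasFDerivAt_of_contDiffOn hU hη hx
  intro w z
  have h1 := hηd.clm_apply (hasFDerivAt_clm_apply_const hφd z)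
  have h0 : HasFDerivAt (fun p => η p (φ p z)) (0 : E →L[ℝ] ℝ) x := by
    refine (hasFDerivAt_const (0:ℝ) x).congr_of_eventuallyEq ?_
    exact Filter.eventuallyEq_of_mem (hU.mem_nhds hx)
      (fun p hp => acs_eta_phi (φ p) (ξ p) (η p) (hηξ p hp) (hφφ p hp) z)
  have h2 := h1.unique h0
  have h3 := ContinuousLinearMap.ext_iff.mp h2 w
  simp only [ContinuousLinearMap.add_apply, ContinuousLinearMap.comp_apply,
    ContinuousLinearMap.flip_apply, ContinuousLinearMap.zero_apply] at h3
  linarith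

end Deriv

section Deriv2

variable {E : Type*} [NormedAddCommGroup E] [NormedSpace ℝ E]
variable {U : Set E} {φ : E → E →L[ℝ] E} {ξ : E → E} {η : E → E →L[ℝ] ℝ} {x : E}

lemma acs_N (hU : IsOpen U) (hφ : ContDiffOn ℝ (⊤ : ℕ∞) φ U)
    (hη : ContDiffOn ℝ (⊤ : ℕ∞) η U)
    (hnormal : ∀ X Y : E → E,
      ContDiffOn ℝ (⊤ : ℕ∞) X U → ContDiffOn ℝ (⊤ : ℕ∞) Y U →
      ∀ p ∈ U, almostContactNijenhuis φ ξ η X Y p = 0) (hx : x ∈ U) :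
    ∀ u v, fderiv ℝ φ x (φ x u) v - fderiv ℝ φ x (φ x v) u
      + φ x (fderiv ℝ φ x v u) - φ x (fderiv ℝ φ x u v)
      + (fderiv ℝ η x u v - fderiv ℝ η x v u) • ξ x = 0 := by
  have hφd := hasFDerivAt_of_contDiffOn hU hφ hx
  have hηd := hasFDerivAt_of_contDiffOn hU hη hx
  intro u v
  have e1 : lieBracket ℝ (fun y => φ y u) (fun y => φ y v) x
      = fderiv ℝ φ x (φ x u) v - fderiv ℝ φ x (φ x v) u := by
    simp only [lieBracket, (hasFDerivAt_clm_apply_const hφd u).fderiv,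
      (hasFDerivAt_clm_apply_const hφd v).fderiv, ContinuousLinearMap.flip_apply]
  have e2 : lieBracket ℝ (fun _ : E => u) (fun _ : E => v) x = 0 := by
    simp [lieBracket]
  have e3 : lieBracket ℝ (fun y => φ y u) (fun _ : E => v) x = - fderiv ℝ φ x v u := by
    simp [lieBracket, (hasFDerivAt_clm_apply_const hφd u).fderiv]
  have e4 : lieBracket ℝ (fun _ : E => u) (fun y => φ y v) x = fderiv ℝ φ x u v := by
    simp [lieBracket, (hasFDerivAt_clm_apply_const hφd v).fderiv]
  have e5 : fderiv ℝ (fun y => η y v) x u = fderiv ℝ η x u v := by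
    rw [(hasFDerivAt_clm_apply_const hηd v).fderiv]; rfl
  have e6 : fderiv ℝ (fun y => η y u) x v = fderiv ℝ η x v u := by
    rw [(hasFDerivAt_clm_apply_const hηd u).fderiv]; rfl
  have h := hnormal (fun _ => u) (fun _ => v) contDiffOn_const contDiffOn_const x hx
  simp only [almostContactNijenhuis] at h
  rw [e1, e2, e3, e4, e5, e6] at h
  simp only [map_zero, map_neg, sub_zero] at h
  linear_combination (norm := module) h

end Deriv2

section Deriv3

variable {E : Type*} [NormedAddCommGroup E] [NormedSpace ℝ E]
variable {U : Set E} {φ : E → E →L[ℝ] E} {ξ : E → E} {η : E → E →L[ℝ] ℝ} {x : E}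

variable (hU : IsOpen U) (hφ : ContDiffOn ℝ (⊤ : ℕ∞) φ U)
    (hξ : ContDiffOn ℝ (⊤ : ℕ∞) ξ U) (hη : ContDiffOn ℝ (⊤ : ℕ∞) η U)
    (hηξ : ∀ p ∈ U, η p (ξ p) = 1)
    (hφφ : ∀ p ∈ U, ∀ v, φ p (φ p v) = -v + η p v • ξ p)
    (hnormal : ∀ X Y : E → E,
      ContDiffOn ℝ (⊤ : ℕ∞) X U → ContDiffOn ℝ (⊤ : ℕ∞) Y U →
      ∀ p ∈ U, almostContactNijenhuis φ ξ η X Y p = 0)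
    (hx : x ∈ U)

include hU hφ hξ hη hηξ hφφ hnormal hx in
lemma acs_E : ∀ v, fderiv ℝ η x (ξ x) v = fderiv ℝ η x v (ξ x) := by
  intro v
  have hc : φ x (ξ x) = 0 := acs_phi_xi (φ x) (ξ x) (η x) (hηξ x hx) (hφφ x hx)
  have h := acs_N hU hφ hη hnormal hx (ξ x) v
  rw [hc] at h
  rw [acs_c' hU hφ hξ hηξ hφφ hx (φ x v), acs_c' hU hφ hξ hηξ hφφ hx v] at h
  simp only [map_zero, ContinuousLinearMap.zero_apply, map_neg] at h
  rw [hφφ x hx (fderiv ℝ ξ x v)] at h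
  -- apply η x
  have h5 := congrArg (η x) h
  simp only [map_add, map_sub, map_neg, map_smul, map_zero, smul_eq_mul, hηξ x hx,
    mul_one, acs_eta_phi (φ x) (ξ x) (η x) (hηξ x hx) (hφφ x hx),
    acs_a' hU hξ hη hηξ hx] at h5
  linarith

include hU hφ hξ hη hηξ hφφ hnormal hx in
lemma acs_F : ∀ v, fderiv ℝ φ x (ξ x) v
    = fderiv ℝ ξ x (φ x v) - φ x (fderiv ℝ ξ x v) := by
  intro v
  have hc : φ x (ξ x) = 0 := acs_phi_xi (φ x) (ξ x) (η x) (hηξ x hx) (hφφ x hx)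
  have h := acs_N hU hφ hη hnormal hx (ξ x) v
  rw [hc] at h
  rw [acs_c' hU hφ hξ hηξ hφφ hx (φ x v), acs_c' hU hφ hξ hηξ hφφ hx v] at h
  simp only [map_zero, ContinuousLinearMap.zero_apply, map_neg] at h
  rw [hφφ x hx (fderiv ℝ ξ x v)] at h
  -- apply φ x
  have h6 := congrArg (φ x) h
  simp only [map_add, map_sub, map_neg, map_smul, map_zero, hc, smul_zero] at h6
  rw [hφφ x hx (fderiv ℝ ξ x (φ x v)), hφφ x hx (fderiv ℝ φ x (ξ x) v)] at h6
  rw [acs_a' hU hξ hη hηξ hx (φ x v)] at h6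
  rw [acs_d' hU hφ hη hηξ hφφ hx (ξ x) v] at h6
  rw [acs_E hU hφ hξ hη hηξ hφφ hnormal hx (φ x v)] at h6
  linear_combination (norm := module) h6

include hU hφ hξ hη hηξ hφφ hnormal hx in
lemma acs_G : ∀ u v, - fderiv ℝ η x (φ x u) (φ x v) + fderiv ℝ η x (φ x v) (φ x u)
    + fderiv ℝ η x u v - fderiv ℝ η x v u = 0 := by
  intro u v
  have h := acs_N hU hφ hη hnormal hx u v
  have h5 := congrArg (η x) h
  simp only [map_add, map_sub, map_smul, map_zero, smul_eq_mul, hηξ x hx, mul_one,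
    acs_eta_phi (φ x) (ξ x) (η x) (hηξ x hx) (hφφ x hx),
    acs_d' hU hφ hη hηξ hφφ hx] at h5
  linarith

include hU hφ hξ hη hηξ hφφ hnormal hx in
lemma acs_H : ∀ u v, fderiv ℝ η x (φ x u) v - fderiv ℝ η x (φ x v) u
    - fderiv ℝ η x v (φ x u) + fderiv ℝ η x u (φ x v) = 0 := by
  intro u v
  have g1 := acs_G hU hφ hξ hη hηξ hφφ hnormal hx (φ x u) v
  rw [hφφ x hx u] at g1
  simp only [map_add, map_neg, map_smul, ContinuousLinearMap.add_apply,
    ContinuousLinearMap.neg_apply, ContinuousLinearMap.smul_apply, smul_eq_mul] at g1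
  rw [acs_E hU hφ hξ hη hηξ hφφ hnormal hx (φ x v)] at g1
  linarith

end Deriv3

set_option maxHeartbeats 4000000 in
/-- If both smooth almost contact structures `(φ₁, ξ₁, η₁)` on `U₁` and
`(φ₂, ξ₂, η₂)` on `U₂` are normal, then for every `a, b ∈ ℝ` with `b ≠ 0`, the
Nijenhuis tensor of the almost complex structure `J_{a,b}` on `U₁ × U₂` vanishes. -/
theorem normal_implies_Jab_nijenhuis_vanishes
    {E₁ E₂ : Type*} [NormedAddCommGroup E₁] [NormedSpace ℝ E₁] [FiniteDimensional ℝ E₁]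
    [NormedAddCommGroup E₂] [NormedSpace ℝ E₂] [FiniteDimensional ℝ E₂]
    (U₁ : Set E₁) (hU₁ : IsOpen U₁) (U₂ : Set E₂) (hU₂ : IsOpen U₂)
    (φ₁ : E₁ → (E₁ →L[ℝ] E₁)) (ξ₁ : E₁ → E₁) (η₁ : E₁ → (E₁ →L[ℝ] ℝ))
    (φ₂ : E₂ → (E₂ →L[ℝ] E₂)) (ξ₂ : E₂ → E₂) (η₂ : E₂ → (E₂ →L[ℝ] ℝ))
    (hφ₁ : ContDiffOn ℝ (⊤ : ℕ∞) φ₁ U₁) (hξ₁ : ContDiffOn ℝ (⊤ : ℕ∞) ξ₁ U₁)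
    (hη₁ : ContDiffOn ℝ (⊤ : ℕ∞) η₁ U₁)
    (hφ₂ : ContDiffOn ℝ (⊤ : ℕ∞) φ₂ U₂) (hξ₂ : ContDiffOn ℝ (⊤ : ℕ∞) ξ₂ U₂)
    (hη₂ : ContDiffOn ℝ (⊤ : ℕ∞) η₂ U₂)
    (hηξ₁ : ∀ x ∈ U₁, η₁ x (ξ₁ x) = 1)
    (hφφ₁ : ∀ x ∈ U₁, ∀ v : E₁, φ₁ x (φ₁ x v) = -v + η₁ x v • ξ₁ x)
    (hηξ₂ : ∀ x ∈ U₂, η₂ x (ξ₂ x) = 1)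
    (hφφ₂ : ∀ x ∈ U₂, ∀ v : E₂, φ₂ x (φ₂ x v) = -v + η₂ x v • ξ₂ x)
    (hnormal₁ : ∀ X Y : E₁ → E₁,
      ContDiffOn ℝ (⊤ : ℕ∞) X U₁ → ContDiffOn ℝ (⊤ : ℕ∞) Y U₁ →
      ∀ x ∈ U₁, almostContactNijenhuis φ₁ ξ₁ η₁ X Y x = 0)
    (hnormal₂ : ∀ X Y : E₂ → E₂,
      ContDiffOn ℝ (⊤ : ℕ∞) X U₂ → ContDiffOn ℝ (⊤ : ℕ∞) Y U₂ →
      ∀ x ∈ U₂, almostContactNijenhuis φ₂ ξ₂ η₂ X Y x = 0)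
    (a b : ℝ) (hb : b ≠ 0)
    (J : E₁ × E₂ → E₁ × E₂ → E₁ × E₂)
    (hJ : ∀ (p : E₁ × E₂) (v : E₁ × E₂), J p v =
      (φ₁ p.1 v.1 - ((a / b) * η₁ p.1 v.1 + ((a ^ 2 + b ^ 2) / b) * η₂ p.2 v.2) • ξ₁ p.1,
       φ₂ p.2 v.2 + ((1 / b) * η₁ p.1 v.1 + (a / b) * η₂ p.2 v.2) • ξ₂ p.2)) :
    ∀ X Y : E₁ × E₂ → E₁ × E₂,
      ContDiffOn ℝ (⊤ : ℕ∞) X (U₁ ×ˢ U₂) → ContDiffOn ℝ (⊤ : ℕ∞) Y (U₁ ×ˢ U₂) →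
      ∀ x ∈ U₁ ×ˢ U₂, endNijenhuis J X Y x = 0 := by
  intro X Y hX hY x hx
  have hx1 : x.1 ∈ U₁ := hx.1
  have hx2 : x.2 ∈ U₂ := hx.2
  have hUo : IsOpen (U₁ ×ˢ U₂) := hU₁.prod hU₂
  have hφ1d := hasFDerivAt_of_contDiffOn hU₁ hφ₁ hx1
  have hξ1d := hasFDerivAt_of_contDiffOn hU₁ hξ₁ hx1
  have hη1d := hasFDerivAt_of_contDiffOn hU₁ hη₁ hx1
  have hφ2d := hasFDerivAt_of_contDiffOn hU₂ hφ₂ hx2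
  have hξ2d := hasFDerivAt_of_contDiffOn hU₂ hξ₂ hx2
  have hη2d := hasFDerivAt_of_contDiffOn hU₂ hη₂ hx2
  have hXd := hasFDerivAt_of_contDiffOn hUo hX hx
  have hYd := hasFDerivAt_of_contDiffOn hUo hY hx
  have hφ1c := hφ1d.comp x (hasFDerivAt_fst (p := x))
  have hξ1c := hξ1d.comp x (hasFDerivAt_fst (p := x))
  have hη1c := hη1d.comp x (hasFDerivAt_fst (p := x))
  have hφ2c := hφ2d.comp x (hasFDerivAt_snd (p := x))
  have hξ2c := hξ2d.comp x (hasFDerivAt_snd (p := x))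
  have hη2c := hη2d.comp x (hasFDerivAt_snd (p := x))
  have hJXe := ((hφ1c.clm_apply hXd.fst).sub
      ((((hη1c.clm_apply hXd.fst).const_mul (a/b)).add
        ((hη2c.clm_apply hXd.snd).const_mul ((a^2+b^2)/b))).smul hξ1c)).prodMk
    ((hφ2c.clm_apply hXd.snd).add
      ((((hη1c.clm_apply hXd.fst).const_mul (1/b)).add
        ((hη2c.clm_apply hXd.snd).const_mul (a/b))).smul hξ2c))
  have hJYe := ((hφ1c.clm_apply hYd.fst).sub
      ((((hη1c.clm_apply hYd.fst).const_mul (a/b)).add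
        ((hη2c.clm_apply hYd.snd).const_mul ((a^2+b^2)/b))).smul hξ1c)).prodMk
    ((hφ2c.clm_apply hYd.snd).add
      ((((hη1c.clm_apply hYd.fst).const_mul (1/b)).add
        ((hη2c.clm_apply hYd.snd).const_mul (a/b))).smul hξ2c))
  have hJX : HasFDerivAt (fun p => J p (X p)) _ x :=
    hJXe.congr_of_eventuallyEq (Filter.Eventually.of_forall fun p => hJ p (X p))
  have hJY : HasFDerivAt (fun p => J p (Y p)) _ x :=
    hJYe.congr_of_eventuallyEq (Filter.Eventually.of_forall fun p => hJ p (Y p))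
  simp only [endNijenhuis, lieBracket]
  rw [hJX.fderiv, hJY.fderiv]
  simp only [hJ]
  have hc1 : φ₁ x.1 (ξ₁ x.1) = 0 := acs_phi_xi _ _ _ (hηξ₁ x.1 hx1) (hφφ₁ x.1 hx1)
  have hc2 : φ₂ x.2 (ξ₂ x.2) = 0 := acs_phi_xi _ _ _ (hηξ₂ x.2 hx2) (hφφ₂ x.2 hx2)
  have hd1 : ∀ v, η₁ x.1 (φ₁ x.1 v) = 0 := acs_eta_phi _ _ _ (hηξ₁ x.1 hx1) (hφφ₁ x.1 hx1)
  have hd2 : ∀ v, η₂ x.2 (φ₂ x.2 v) = 0 := acs_eta_phi _ _ _ (hηξ₂ x.2 hx2) (hφφ₂ x.2 hx2)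
  have ha1 := acs_a' hU₁ hξ₁ hη₁ hηξ₁ hx1
  have ha2 := acs_a' hU₂ hξ₂ hη₂ hηξ₂ hx2
  have hd'1 := acs_d' hU₁ hφ₁ hη₁ hηξ₁ hφφ₁ hx1
  have hd'2 := acs_d' hU₂ hφ₂ hη₂ hηξ₂ hφφ₂ hx2
  have hE1 := acs_E hU₁ hφ₁ hξ₁ hη₁ hηξ₁ hφφ₁ hnormal₁ hx1
  have hE2 := acs_E hU₂ hφ₂ hξ₂ hη₂ hηξ₂ hφφ₂ hnormal₂ hx2
  have hF1 := acs_F hU₁ hφ₁ hξ₁ hη₁ hηξ₁ hφφ₁ hnormal₁ hx1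
  have hF2 := acs_F hU₂ hφ₂ hξ₂ hη₂ hηξ₂ hφφ₂ hnormal₂ hx2
  have hN1 := acs_N hU₁ hφ₁ hη₁ hnormal₁ hx1
  have hN2 := acs_N hU₂ hφ₂ hη₂ hnormal₂ hx2
  have hH1 := acs_H hU₁ hφ₁ hξ₁ hη₁ hηξ₁ hφφ₁ hnormal₁ hx1
  have hH2 := acs_H hU₂ hφ₂ hξ₂ hη₂ hηξ₂ hφφ₂ hnormal₂ hx2
  simp only [ContinuousLinearMap.add_apply, ContinuousLinearMap.sub_apply,
    ContinuousLinearMap.comp_apply, ContinuousLinearMap.coe_comp', Function.comp_apply,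
    ContinuousLinearMap.prod_apply, ContinuousLinearMap.smul_apply,
    ContinuousLinearMap.smulRight_apply, ContinuousLinearMap.coe_fst',
    ContinuousLinearMap.coe_snd', ContinuousLinearMap.flip_apply,
    Prod.fst_add, Prod.fst_sub, Prod.snd_add, Prod.snd_sub, Prod.smul_fst, Prod.smul_snd,
    map_add, map_sub, map_smul, map_neg, map_zero, smul_eq_mul,
    hφφ₁ x.1 hx1, hφφ₂ x.2 hx2, hc1, hc2, hd1, hd2, hηξ₁ x.1 hx1, hηξ₂ x.2 hx2,
    ha1, ha2, hd'1, hd'2, hE1, hE2, hF1, hF2,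
    smul_zero, mul_zero, zero_smul, add_zero, zero_add, mul_one, Pi.add_apply]
  rw [Prod.ext_iff]
  simp only [Prod.fst_zero, Prod.snd_zero, Prod.fst_add, Prod.fst_sub, Prod.snd_add,
    Prod.snd_sub, Prod.smul_fst, Prod.smul_snd]
  constructor
  · linear_combination (norm := (match_scalars <;> (first | ring1 | (field_simp <;> ring1)))) hN1 (X x).1 (Y x).1
      + hH1 (X x).1 (Y x).1 • ((-(a/b)) • ξ₁ x.1)
      + hH2 (X x).2 (Y x).2 • ((-((a^2+b^2)/b)) • ξ₁ x.1)
  · linear_combination (norm := (match_scalars <;> (first | ring1 | (field_simp <;> ring1)))) hN2 (X x).2 (Y x).2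
      + hH1 (X x).1 (Y x).1 • ((1/b) • ξ₂ x.2)
      + hH2 (X x).2 (Y x).2 • ((a/b) • ξ₂ x.2)
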